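/- For every integer k ≥ 2, the set of eigenvalues of the Laplacian matrix L_A^{(k)} of the k-vertex antiregular graph is exactly {0, 1, …, k} \ {⌈k/2⌉}, and every eigenvalue is simple (its eigenspace is one-dimensional). -/

import Mathlib

/-- The `k`-vertex antiregular graph: vertices `1, …, k` (realized as `Fin k`, 0-based),
with `i` adjacent to `j` iff `i ≠ j` and `i + j ≤ k + 1` (in 1-based labels). -/
def antiregular (k : ℕ) : SimpleGraph (Fin k) where
  Adj i j := i ≠ j ∧ (i.val + 1) + (j.val + 1) ≤ k + 1
  symm := ⟨fun i j h => ⟨h.1.symm, by have := h.2; omega⟩⟩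
  loopless := ⟨fun i h => h.1 rfl⟩

instance (k : ℕ) : DecidableRel (antiregular k).Adj :=
  fun i j => inferInstanceAs (Decidable (i ≠ j ∧ (i.val + 1) + (j.val + 1) ≤ k + 1))

/-- Integer-valued eigenvector formula for the antiregular graph Laplacian. -/
def wC (n m j : ℕ) : ℤ :=
  if 2 * m + 1 ≤ n then
    (if j + m = n then (n : ℤ) - 2 * m else if m ≤ j ∧ j + m + 1 ≤ n then -1 else 0)
  else
    (if j + m = n then (n : ℤ) + 1 - 2 * m else if n + 1 ≤ j + m ∧ j + 1 ≤ m then 1 else 0)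

/-- Closed form for partial sums of `wC`. -/
def QC (n m t : ℕ) : ℤ :=
  if 2 * m + 1 ≤ n then
    (if m ≤ t ∧ t + m ≤ n then (m : ℤ) - t else 0)
  else
    (if n + 1 ≤ t + m ∧ t ≤ m then (t : ℤ) - m else 0)

lemma sumC (n m : ℕ) (hm : m ≤ n) (hcase : 2 * m + 1 ≤ n ∨ n + 2 ≤ 2 * m) (t : ℕ) :
    ∑ j ∈ Finset.range t, wC n m j = QC n m t := by
  induction t with
  | zero => simp only [Finset.range_zero, Finset.sum_empty, QC]; split_ifs <;> omega
  | succ t ih =>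
    rw [Finset.sum_range_succ, ih]
    unfold QC wC
    split_ifs <;> omega

lemma idC (n m i : ℕ) (hm : m ≤ n) (hcase : 2 * m + 1 ≤ n ∨ n + 2 ≤ 2 * m) (hi : i < n) :
    ((n : ℤ) - i) * wC n m i - QC n m (n - i) = m * wC n m i := by
  rcases hcase with hc | hc
  · unfold wC QC
    simp only [if_pos hc]
    split_ifs with h1 h2 h3 h4 h5
    · have e1 : ((n - i : ℕ) : ℤ) = m := by omega
      have e2 : (n : ℤ) - i = m := by omega
      rw [e1, e2]; ring
    · omega
    · have e1 : ((n - i : ℕ) : ℤ) = (n : ℤ) - i := by omega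
      rw [e1]; ring
    · omega
    · omega
    · ring
  · have hc' : ¬ (2 * m + 1 ≤ n) := by omega
    unfold wC QC
    simp only [if_neg hc']
    split_ifs with h1 h2 h3 h4 h5
    · have e1 : ((n - i : ℕ) : ℤ) = m := by omega
      have e2 : (n : ℤ) - i = m := by omega
      rw [e1, e2]; ring
    · omega
    · have e1 : ((n - i : ℕ) : ℤ) = (n : ℤ) - i := by omega
      rw [e1]; ring
    · omega
    · omega
    · ring

/-- The real eigenvector. -/
def vC (n m : ℕ) : Fin n → ℝ := fun j => ((wC n m j.val : ℤ) : ℝ)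

lemma lap_apply (n : ℕ) (w : ℕ → ℤ) (i : Fin n) :
    ((antiregular n).lapMatrix ℝ).mulVec (fun j => ((w j.val : ℤ) : ℝ)) i
      = ((((n - i.val : ℕ) : ℤ) * w i.val - ∑ j ∈ Finset.range (n - i.val), w j : ℤ) : ℝ) := by
  rw [SimpleGraph.lapMatrix_mulVec_apply]
  have h1 : ((antiregular n).degree i : ℝ) * ((w i.val : ℤ) : ℝ)
        - ∑ u ∈ (antiregular n).neighborFinset i, ((w u.val : ℤ) : ℝ)
      = ∑ u ∈ (antiregular n).neighborFinset i, (((w i.val : ℤ) : ℝ) - ((w u.val : ℤ) : ℝ)) := by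
    rw [Finset.sum_sub_distrib, Finset.sum_const, nsmul_eq_mul, SimpleGraph.degree]
  rw [h1, SimpleGraph.neighborFinset_eq_filter, Finset.sum_filter]
  have h2 : ∀ u : Fin n, (if (antiregular n).Adj i u
        then (((w i.val : ℤ) : ℝ) - ((w u.val : ℤ) : ℝ)) else 0)
      = (fun j0 : ℕ => if i.val ≠ j0 ∧ i.val + j0 + 2 ≤ n + 1
        then (((w i.val : ℤ) : ℝ) - ((w j0 : ℤ) : ℝ)) else 0) u.val := by
    intro u
    refine if_congr ?_ rfl rfl
    show (i ≠ u ∧ (i.val + 1) + (u.val + 1) ≤ n + 1) ↔ _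
    rw [Ne, Ne, Fin.ext_iff]
    constructor
    · rintro ⟨a, b⟩; exact ⟨a, by omega⟩
    · rintro ⟨a, b⟩; exact ⟨a, by omega⟩
  rw [Finset.sum_congr rfl (fun u _ => h2 u),
    Fin.sum_univ_eq_sum_range (fun j0 : ℕ => if i.val ≠ j0 ∧ i.val + j0 + 2 ≤ n + 1
      then (((w i.val : ℤ) : ℝ) - ((w j0 : ℤ) : ℝ)) else 0) n]
  have h3 : ∑ j0 ∈ Finset.range n, (if i.val ≠ j0 ∧ i.val + j0 + 2 ≤ n + 1
        then (((w i.val : ℤ) : ℝ) - ((w j0 : ℤ) : ℝ)) else 0)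
      = ∑ j0 ∈ Finset.range (n - i.val), (((w i.val : ℤ) : ℝ) - ((w j0 : ℤ) : ℝ)) := by
    rw [← Finset.sum_subset (Finset.range_subset_range.mpr (by omega : n - i.val ≤ n))
      (fun x hx hx' => ?_)]
    · refine Finset.sum_congr rfl (fun j0 hj0 => ?_)
      rw [Finset.mem_range] at hj0
      by_cases hji : i.val = j0
      · rw [if_neg (by tauto), ← hji, sub_self]
      · rw [if_pos ⟨hji, by have := i.isLt; omega⟩]
    · rw [Finset.mem_range] at hx hx'
      rw [if_neg (by omega)]
  rw [h3, Finset.sum_sub_distrib, Finset.sum_const, Finset.card_range, nsmul_eq_mul]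
  push_cast
  ring

lemma eigenC (n m : ℕ) (hm : m ≤ n) (hcase : 2 * m + 1 ≤ n ∨ n + 2 ≤ 2 * m) :
    ((antiregular n).lapMatrix ℝ).mulVec (vC n m) = (m : ℝ) • vC n m := by
  funext i
  have e : (((n - i.val : ℕ) : ℤ) * wC n m i.val
        - ∑ j ∈ Finset.range (n - i.val), wC n m j) = m * wC n m i.val := by
    rw [sumC n m hm hcase,
      show ((n - i.val : ℕ) : ℤ) = (n : ℤ) - i.val by have := i.isLt; omega]
    exact idC n m i.val hm hcase i.isLt
  have := lap_apply n (wC n m) i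
  rw [show (fun j : Fin n => ((wC n m j.val : ℤ) : ℝ)) = vC n m from rfl] at this
  rw [this, e]
  push_cast
  simp [vC]

lemma vC_ne (n m : ℕ) (hm : m ≤ n) (hcase : 2 * m + 1 ≤ n ∨ n + 2 ≤ 2 * m) :
    vC n m ≠ 0 := by
  rcases hcase with hc | hc
  · intro h0
    have h1 := congrFun h0 ⟨m, by omega⟩
    simp only [vC, wC, Pi.zero_apply] at h1
    rw [if_pos hc, if_neg (by omega), if_pos (by omega)] at h1
    norm_num at h1
  · intro h0
    have h1 := congrFun h0 ⟨n - m, by omega⟩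
    simp only [vC, wC, Pi.zero_apply] at h1
    rw [if_neg (by omega), if_pos (by omega)] at h1
    have h2 : (n : ℤ) + 1 - 2 * m = 0 := by exact_mod_cast h1
    omega


/-- the eigenvalues of the Laplacian of the `k`-vertex antiregular graph
are exactly `{0, 1, …, k} \ {⌈k/2⌉}` (note `⌈k/2⌉ = (k+1)/2` in ℕ), and each eigenvalue
is simple. -/
theorem stmt_17 (k : ℕ) (hk : 2 ≤ k) :
    (∀ mu : ℝ,
      (∃ v : Fin k → ℝ, v ≠ 0 ∧ ((antiregular k).lapMatrix ℝ).mulVec v = mu • v) ↔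
      (∃ m : ℕ, m ≤ k ∧ m ≠ (k + 1) / 2 ∧ mu = (m : ℝ))) ∧
    (∀ mu : ℝ,
      (∃ v : Fin k → ℝ, v ≠ 0 ∧ ((antiregular k).lapMatrix ℝ).mulVec v = mu • v) →
      Module.finrank ℝ (LinearMap.ker (((antiregular k).lapMatrix ℝ)
        - mu • (1 : Matrix (Fin k) (Fin k) ℝ)).mulVecLin) = 1) := by


  classical
  set L : Matrix (Fin k) (Fin k) ℝ := (antiregular k).lapMatrix ℝ with hL
  set T : Module.End ℝ (Fin k → ℝ) := L.mulVecLin with hT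
  set S : Finset ℕ := (Finset.range (k + 1)).erase ((k + 1) / 2) with hS
  have hmemS : ∀ m : ℕ, m ∈ S ↔ (m ≤ k ∧ m ≠ (k + 1) / 2) := by
    intro m
    rw [hS, Finset.mem_erase, Finset.mem_range]
    omega
  have hScard : S.card = k := by
    rw [hS, Finset.card_erase_of_mem (Finset.mem_range.mpr (by omega)), Finset.card_range]
    omega
  have hcaseS : ∀ m : ℕ, m ≤ k → m ≠ (k + 1) / 2 → (2 * m + 1 ≤ k ∨ k + 2 ≤ 2 * m) := by
    intro m h1 h2; omega
  have hEV : ∀ m : ℕ, m ≤ k → m ≠ (k + 1) / 2 →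
      Module.End.HasEigenvector T (m : ℝ) (vC k m) := by
    intro m h1 h2
    refine Module.End.hasEigenvector_iff.mpr ⟨?_, vC_ne k m h1 (hcaseS m h1 h2)⟩
    rw [Module.End.mem_eigenspace_iff]
    show L.mulVec (vC k m) = _
    exact eigenC k m h1 (hcaseS m h1 h2)
  have hfr : Module.finrank ℝ (Fin k → ℝ) = k := Module.finrank_fin_fun ℝ
  -- forward direction
  have hforward : ∀ mu : ℝ,
      (∃ v : Fin k → ℝ, v ≠ 0 ∧ L.mulVec v = mu • v) →
      (∃ m : ℕ, m ≤ k ∧ m ≠ (k + 1) / 2 ∧ mu = (m : ℝ)) := by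
    intro mu ⟨v, hv0, hveq⟩
    by_contra hno
    push_neg at hno
    have hmune : ∀ m : ℕ, m ∈ S → mu ≠ (m : ℝ) := by
      intro m hm
      exact fun h => (hno m ((hmemS m).mp hm).1 ((hmemS m).mp hm).2) h
    let ι := Option {x : ℕ // x ∈ S}
    let μf : ι → ℝ := fun o => o.elim mu (fun x => ((x : ℕ) : ℝ))
    let vf : ι → (Fin k → ℝ) := fun o => o.elim v (fun x => vC k (x : ℕ))
    have hinj : Function.Injective μf := by
      rintro (_ | x) (_ | y) h <;> simp only [μf, Option.elim] at h
      · rfl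
      · exact absurd h (hmune y y.2)
      · exact absurd h.symm (hmune x x.2)
      · have : (x : ℕ) = (y : ℕ) := Nat.cast_injective h
        exact congrArg Option.some (Subtype.ext this)
    have heig : ∀ o : ι, Module.End.HasEigenvector T (μf o) (vf o) := by
      rintro (_ | x)
      · refine Module.End.hasEigenvector_iff.mpr ⟨?_, hv0⟩
        rw [Module.End.mem_eigenspace_iff]
        exact hveq
      · exact hEV x ((hmemS x).mp x.2).1 ((hmemS x).mp x.2).2
    have hli := Module.End.eigenvectors_linearIndependent' T μf hinj vf heig
    have hcard := hli.fintype_card_le_finrank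
    rw [hfr] at hcard
    have : Fintype.card ι = S.card + 1 := by
      rw [Fintype.card_option, Fintype.card_coe]
    omega
  constructor
  · intro mu
    constructor
    · exact hforward mu
    · rintro ⟨m, h1, h2, rfl⟩
      exact ⟨vC k m, vC_ne k m h1 (hcaseS m h1 h2), eigenC k m h1 (hcaseS m h1 h2)⟩
  · intro mu hex
    obtain ⟨m, h1, h2, rfl⟩ := hforward mu hex
    have hker : LinearMap.ker ((L - (m : ℝ) • (1 : Matrix (Fin k) (Fin k) ℝ)).mulVecLin)
        = Module.End.eigenspace T ((m : ℝ)) := by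
      rw [Module.End.eigenspace_def]
      ext x
      simp only [LinearMap.mem_ker, Matrix.mulVecLin_apply, Matrix.sub_mulVec,
        Matrix.smul_mulVec, Matrix.one_mulVec, LinearMap.sub_apply,
        LinearMap.smul_apply, Module.End.one_apply]
      rfl
    rw [hker]
    set K := Module.End.eigenspace T ((m : ℝ)) with hK
    set Rt : Submodule ℝ (Fin k → ℝ) :=
      ⨆ x : {y : ℕ // y ∈ S.erase m}, Module.End.eigenspace T (((x : ℕ) : ℝ)) with hRt
    have hmS : m ∈ S := (hmemS m).mpr ⟨h1, h2⟩
    have hdisj : Disjoint K Rt := by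
      refine (Module.End.eigenspaces_iSupIndep T ((m : ℝ))).mono_right ?_
      refine iSup_le fun x => ?_
      have hx : ((x : ℕ) : ℝ) ≠ ((m : ℕ) : ℝ) := by
        have hxm : (x : ℕ) ≠ m := Finset.ne_of_mem_erase x.2
        exact fun h => hxm (Nat.cast_injective h)
      exact le_iSup₂ (f := fun ν (_ : ν ≠ ((m : ℕ) : ℝ)) => Module.End.eigenspace T ν)
        ((x : ℕ) : ℝ) hx
    have hsum := Submodule.finrank_sup_add_finrank_inf_eq K Rt
    rw [hdisj.eq_bot] at hsum
    have hbot : Module.finrank ℝ (⊥ : Submodule ℝ (Fin k → ℝ)) = 0 := finrank_bot ℝ _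
    rw [hbot] at hsum
    have hsup_le : Module.finrank ℝ (K ⊔ Rt : Submodule ℝ (Fin k → ℝ)) ≤ k := by
      have h := Submodule.finrank_le (K ⊔ Rt)
      rw [hfr] at h
      exact h
    have hRtcard : k - 1 ≤ Module.finrank ℝ Rt := by
      have hli : LinearIndependent ℝ (fun x : {y : ℕ // y ∈ S.erase m} => vC k (x : ℕ)) := by
        refine Module.End.eigenvectors_linearIndependent' T
          (fun x : {y : ℕ // y ∈ S.erase m} => (((x : ℕ) : ℝ))) ?_ _ ?_
        · intro x y h
          exact Subtype.ext (Nat.cast_injective h)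
        · intro x
          have hx := (hmemS x).mp (Finset.mem_of_mem_erase x.2)
          exact hEV x hx.1 hx.2
      have hspan : Submodule.span ℝ
          (Set.range (fun x : {y : ℕ // y ∈ S.erase m} => vC k (x : ℕ))) ≤ Rt := by
        rw [Submodule.span_le]
        rintro _ ⟨x, rfl⟩
        have hx := (hmemS x).mp (Finset.mem_of_mem_erase x.2)
        have hmem := (Module.End.hasEigenvector_iff.mp (hEV x hx.1 hx.2)).1
        exact (le_iSup (fun x : {y : ℕ // y ∈ S.erase m} =>
          Module.End.eigenspace T (((x : ℕ) : ℝ))) x) hmem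
      have := Submodule.finrank_mono hspan
      rw [finrank_span_eq_card hli, Fintype.card_coe,
        Finset.card_erase_of_mem hmS, hScard] at this
      exact this
    have hKpos : 0 < Module.finrank ℝ K := by
      apply Module.finrank_pos_iff_exists_ne_zero.mpr
      refine ⟨⟨vC k m, (Module.End.hasEigenvector_iff.mp (hEV m h1 h2)).1⟩, ?_⟩
      intro hcon
      exact vC_ne k m h1 (hcaseS m h1 h2) (congrArg Subtype.val hcon)
    omega
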